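/- Let n, m, d ≥ 1 be natural numbers and 0 < ε < 1 a real number. Let ψ be a formula consisting of m clauses, each with exactly 3 literals, over n variables, in which every variable occurs in at least one and at most d clauses. Then there exists a monotone formula φ (every literal has positive sign) consisting of exactly m + 4dn clauses, each with exactly 3 literals, over 2n + 3dn variables, such that: (1) every variable of φ occurs in at most 4d clauses of φ; (2) if some assignment NAE-satisfies all m clauses of ψ, then some assignment NAE-satisfies all m + 4dn clauses of φ; and (3) if every assignment NAE-satisfies at most (1−ε)m clauses of ψ, then every assignment NAE-satisfies at most (1 − ε/(1+12d))·(m + 4dn) clauses of φ. -/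

import Mathlib

/-- Value of a literal `(i, s)` under assignment `σ`. -/
def litVal {V : Type*} (σ : V → Bool) (l : V × Bool) : Bool :=
  if l.2 then σ l.1 else !(σ l.1)

/-- A clause is satisfied if some literal evaluates to true. -/
def SatC {V : Type*} {j : ℕ} (σ : V → Bool) (C : Fin j → V × Bool) : Prop :=
  ∃ r, litVal σ (C r) = true

/-- A clause is NAE-satisfied if some literal is true and some literal is false. -/
def NAESatC {V : Type*} {j : ℕ} (σ : V → Bool) (C : Fin j → V × Bool) : Prop :=
  (∃ r, litVal σ (C r) = true) ∧ (∃ r, litVal σ (C r) = false)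

instance {V : Type*} {j : ℕ} (σ : V → Bool) (C : Fin j → V × Bool) :
    Decidable (SatC σ C) := by unfold SatC; infer_instance

instance {V : Type*} {j : ℕ} (σ : V → Bool) (C : Fin j → V × Bool) :
    Decidable (NAESatC σ C) := by unfold NAESatC; infer_instance

/-- Number of clauses of the formula `C` in which variable `i` occurs. -/
def occCount {V : Type*} [DecidableEq V] {ι : Type*} [Fintype ι] {j : ℕ}
    (C : ι → Fin j → V × Bool) (i : V) : ℕ :=
  (Finset.univ.filter (fun a => ∃ r, (C a r).1 = i)).card

/-- Number of clauses of the formula `C` satisfied by `σ`. -/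
def satCount {V : Type*} {ι : Type*} [Fintype ι] {j : ℕ}
    (σ : V → Bool) (C : ι → Fin j → V × Bool) : ℕ :=
  (Finset.univ.filter (fun a => SatC σ (C a))).card

/-- Number of clauses of the formula `C` NAE-satisfied by `σ`. -/
def naeCount {V : Type*} {ι : Type*} [Fintype ι] {j : ℕ}
    (σ : V → Bool) (C : ι → Fin j → V × Bool) : ℕ :=
  (Finset.univ.filter (fun a => NAESatC σ (C a))).card

/- ### Auxiliary material for the reduction -/

section Aux

lemma card_filter_equiv {α β : Type*} [Fintype α] [Fintype β] (e : α ≃ β)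
    (p : β → Prop) [DecidablePred p] :
    (Finset.univ.filter p).card = (Finset.univ.filter fun a => p (e a)).card := by
  rw [← Fintype.card_subtype, ← Fintype.card_subtype]
  exact Fintype.card_congr (e.subtypeEquiv (fun a => Iff.rfl)).symm

lemma card_filter_sum {α β : Type*} [Fintype α] [Fintype β]
    (p : α ⊕ β → Prop) [DecidablePred p] :
    (Finset.univ.filter p).card =
      (Finset.univ.filter fun a => p (Sum.inl a)).card +
      (Finset.univ.filter fun b => p (Sum.inr b)).card := by
  rw [Finset.card_filter, Finset.card_filter, Finset.card_filter, Fintype.sum_sum_type]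

lemma card_filter_prod {α β : Type*} [Fintype α] [Fintype β]
    (p : α × β → Prop) [DecidablePred p] :
    (Finset.univ.filter p).card =
      ∑ a : α, (Finset.univ.filter fun b => p (a, b)).card := by
  rw [Finset.card_filter, Fintype.sum_prod_type]
  exact Finset.sum_congr rfl fun a _ => (Finset.card_filter _ _).symm

lemma not_nae_of_const {V : Type*} {j : ℕ} (τ : V → Bool) (C : Fin j → V × Bool)
    (v : Bool) (h : ∀ r, litVal τ (C r) = v) : ¬ NAESatC τ C := by
  rintro ⟨⟨r1, h1⟩, ⟨r2, h2⟩⟩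
  rw [h r1] at h1; rw [h r2] at h2; cases v <;> simp_all

lemma nae_congr {V V' : Type*} {j : ℕ} {τ : V → Bool} {τ' : V' → Bool}
    {C : Fin j → V × Bool} {C' : Fin j → V' × Bool}
    (h : ∀ r, litVal τ (C r) = litVal τ' (C' r)) : NAESatC τ C ↔ NAESatC τ' C' := by
  unfold NAESatC
  constructor <;> rintro ⟨⟨r1, h1⟩, ⟨r2, h2⟩⟩
  · exact ⟨⟨r1, by rw [← h r1]; exact h1⟩, ⟨r2, by rw [← h r2]; exact h2⟩⟩
  · exact ⟨⟨r1, by rw [h r1]; exact h1⟩, ⟨r2, by rw [h r2]; exact h2⟩⟩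

/-- Variable type of the monotone formula: `p`-copies, `q`-copies, auxiliary triples. -/
abbrev Wred (n d : ℕ) := (Fin n ⊕ Fin n) ⊕ (Fin n × Fin d × Fin 3)
/-- Clause index type of the monotone formula. -/
abbrev Ired (n m d : ℕ) := Fin m ⊕ (Fin n × Fin d × Fin 4)

/-- Translation of a literal to a monotone variable. -/
def mvred {n : ℕ} (d : ℕ) (l : Fin n × Bool) : Wred n d :=
  Sum.inl (if l.2 then Sum.inl l.1 else Sum.inr l.1)

/-- Gadget clauses: for `c < 3` the clause `(p_i, q_i, a_{i,t,c})`, for `c = 3`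
the clause `(a_{i,t,0}, a_{i,t,1}, a_{i,t,2})`. -/
def gad {n d : ℕ} (i : Fin n) (t : Fin d) (c : Fin 4) (r : Fin 3) : Wred n d :=
  if h : c.1 < 3 then
    if r.1 = 0 then Sum.inl (Sum.inl i)
    else if r.1 = 1 then Sum.inl (Sum.inr i)
    else Sum.inr (i, t, ⟨c.1, h⟩)
  else Sum.inr (i, t, r)

/-- The monotone formula, on the structured index types. -/
def Phi0 {n m : ℕ} (d : ℕ) (ψ : Fin m → Fin 3 → Fin n × Bool) :
    Ired n m d → Fin 3 → Wred n d × Bool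
  | Sum.inl a => fun r => (mvred d (ψ a r), true)
  | Sum.inr x => fun r => (gad x.1 x.2.1 x.2.2 r, true)

lemma Phi0_snd {n m : ℕ} (d : ℕ) (ψ : Fin m → Fin 3 → Fin n × Bool)
    (x : Ired n m d) (r : Fin 3) : (Phi0 d ψ x r).2 = true := by
  rcases x with a | x <;> rfl

lemma litVal_mvred {n d : ℕ} (τ : Wred n d → Bool) (l : Fin n × Bool)
    (hc : τ (Sum.inl (Sum.inr l.1)) = ! τ (Sum.inl (Sum.inl l.1))) :
    litVal τ (mvred d l, true) = litVal (fun i => τ (Sum.inl (Sum.inl i))) l := by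
  rcases l with ⟨i, s⟩
  cases s <;> simp_all [mvred, litVal]

lemma gad_fail {n d : ℕ} (τ : Wred n d → Bool) (i : Fin n) (t : Fin d)
    (hpq : τ (Sum.inl (Sum.inr i)) = τ (Sum.inl (Sum.inl i))) :
    ∃ c : Fin 4, ¬ NAESatC τ (fun r => (gad i t c r, true)) := by
  set b := τ (Sum.inl (Sum.inl i)) with hb
  by_cases h0 : τ (Sum.inr (i, t, 0)) = b
  · refine ⟨⟨0, by norm_num⟩, not_nae_of_const τ _ b fun r => ?_⟩
    rcases r with ⟨rv, hr⟩
    interval_cases rv <;> simp [gad, litVal, hpq, h0, b]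
  by_cases h1 : τ (Sum.inr (i, t, 1)) = b
  · refine ⟨⟨1, by norm_num⟩, not_nae_of_const τ _ b fun r => ?_⟩
    rcases r with ⟨rv, hr⟩
    interval_cases rv <;> simp [gad, litVal, hpq, h1, b]
  by_cases h2 : τ (Sum.inr (i, t, 2)) = b
  · refine ⟨⟨2, by norm_num⟩, not_nae_of_const τ _ b fun r => ?_⟩
    rcases r with ⟨rv, hr⟩
    interval_cases rv <;> simp [gad, litVal, hpq, h2, b]
  · refine ⟨⟨3, by norm_num⟩, not_nae_of_const τ _ (!b) fun r => ?_⟩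
    rcases r with ⟨rv, hr⟩
    have e0 : τ (Sum.inr (i, t, 0)) = !b := Bool.eq_not_iff.mpr h0
    have e1 : τ (Sum.inr (i, t, 1)) = !b := Bool.eq_not_iff.mpr h1
    have e2 : τ (Sum.inr (i, t, 2)) = !b := Bool.eq_not_iff.mpr h2
    interval_cases rv <;> simp [gad, litVal] <;> first
      | exact e0 | exact e1 | exact e2

lemma gad_sat {n d : ℕ} (τ : Wred n d → Bool) (i : Fin n) (t : Fin d) (c : Fin 4)
    (hpq : τ (Sum.inl (Sum.inr i)) = ! τ (Sum.inl (Sum.inl i)))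
    (ha : ∀ u : Fin 3, τ (Sum.inr (i, t, u)) = decide (u.1 = 2)) :
    NAESatC τ (fun r => (gad i t c r, true)) := by
  by_cases hc : c.1 < 3
  · cases hb : τ (Sum.inl (Sum.inl i))
    · exact ⟨⟨⟨1, by norm_num⟩, by simp [gad, litVal, hc, hpq, hb]⟩,
             ⟨⟨0, by norm_num⟩, by simp [gad, litVal, hc, hb]⟩⟩
    · exact ⟨⟨⟨0, by norm_num⟩, by simp [gad, litVal, hc, hb]⟩,
             ⟨⟨1, by norm_num⟩, by simp [gad, litVal, hc, hpq, hb]⟩⟩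
  · exact ⟨⟨⟨2, by norm_num⟩, by simp [gad, litVal, hc, ha]⟩,
           ⟨⟨0, by norm_num⟩, by simp [gad, litVal, hc, ha]⟩⟩

lemma mvred_pl {n d : ℕ} {l : Fin n × Bool} {i : Fin n}
    (h : mvred d l = Sum.inl (Sum.inl i)) : l.1 = i := by
  rcases l with ⟨j, s⟩; cases s <;> simp_all [mvred]

lemma mvred_pr {n d : ℕ} {l : Fin n × Bool} {i : Fin n}
    (h : mvred d l = Sum.inl (Sum.inr i)) : l.1 = i := by
  rcases l with ⟨j, s⟩; cases s <;> simp_all [mvred]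

lemma gad_eq_pl {n d : ℕ} {i' i : Fin n} {t : Fin d} {c : Fin 4} {r : Fin 3}
    (h : gad i' t c r = Sum.inl (Sum.inl i)) : i' = i ∧ c.1 < 3 := by
  by_cases hc : c.1 < 3
  · rw [gad, dif_pos hc] at h
    split at h
    · simp at h; exact ⟨h, hc⟩
    · split at h <;> simp at h
  · rw [gad, dif_neg hc] at h; simp at h

lemma gad_eq_pr {n d : ℕ} {i' i : Fin n} {t : Fin d} {c : Fin 4} {r : Fin 3}
    (h : gad i' t c r = Sum.inl (Sum.inr i)) : i' = i ∧ c.1 < 3 := by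
  by_cases hc : c.1 < 3
  · rw [gad, dif_pos hc] at h
    split at h
    · simp at h
    · split at h
      · simp at h; exact ⟨h, hc⟩
      · simp at h
  · rw [gad, dif_neg hc] at h; simp at h

lemma gad_eq_aux {n d : ℕ} {i' i : Fin n} {t' t : Fin d} {c : Fin 4} {r u : Fin 3}
    (h : gad i' t' c r = Sum.inr (i, t, u)) : i' = i ∧ t' = t := by
  by_cases hc : c.1 < 3
  · rw [gad, dif_pos hc] at h
    split at h
    · simp at h
    · split at h
      · simp at h
      · simp at h; exact ⟨h.1, h.2.1⟩
  · rw [gad, dif_neg hc] at h; simp at h; exact ⟨h.1, h.2.1⟩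

end Aux


section Count
variable {n d : ℕ}

lemma card_gadget_main (i : Fin n) :
    (Finset.univ.filter fun x : Fin n × Fin d × Fin 4 => x.1 = i ∧ x.2.2.1 < 3).card
      ≤ 3 * d := by
  have h : (Finset.univ.filter fun x : Fin n × Fin d × Fin 4 => x.1 = i ∧ x.2.2.1 < 3).card
      ≤ (Finset.univ : Finset (Fin d × Fin 3)).card := by
    apply Finset.card_le_card_of_injOn
      (fun x => (x.2.1, ⟨min x.2.2.1 2, by omega⟩))
      (fun x _ => Finset.mem_univ _)
    rintro ⟨x1, x2, x3⟩ hx ⟨y1, y2, y3⟩ hy hxy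
    simp at hx hy
    obtain ⟨hx1, hx3⟩ := hx
    obtain ⟨hy1, hy3⟩ := hy
    have h2 : x2 = y2 := congrArg Prod.fst hxy
    have h3 : (⟨min x3.1 2, by omega⟩ : Fin 3) = ⟨min y3.1 2, by omega⟩ :=
      congrArg Prod.snd hxy
    have h3' : x3 = y3 := by
      apply Fin.ext
      have := Fin.mk.injEq (min x3.1 2) _ (min y3.1 2) _ ▸ h3
      have hv : min x3.1 2 = min y3.1 2 := Fin.val_eq_of_eq h3
      omega
    subst hx1; subst h2; subst h3'; simp_all
  simpa [Nat.mul_comm] using h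

lemma card_gadget_aux (i : Fin n) (t : Fin d) :
    (Finset.univ.filter fun x : Fin n × Fin d × Fin 4 => x.1 = i ∧ x.2.1 = t).card
      ≤ 4 := by
  have h : (Finset.univ.filter fun x : Fin n × Fin d × Fin 4 => x.1 = i ∧ x.2.1 = t).card
      ≤ (Finset.univ : Finset (Fin 4)).card := by
    apply Finset.card_le_card_of_injOn (fun x => x.2.2) (fun x _ => Finset.mem_univ _)
    rintro ⟨x1, x2, x3⟩ hx ⟨y1, y2, y3⟩ hy hxy
    simp at hx hy
    simp only at hxy
    simp_all
  simpa using h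

lemma le_three_mul {m : ℕ} (ψ : Fin m → Fin 3 → Fin n × Bool)
    (hocc : ∀ i : Fin n, 1 ≤ (Finset.univ.filter (fun a => ∃ r, (ψ a r).1 = i)).card) :
    n ≤ 3 * m := by
  have h1 : n ≤ ∑ i : Fin n, (Finset.univ.filter (fun a => ∃ r, (ψ a r).1 = i)).card := by
    calc n = ∑ _i : Fin n, 1 := by simp
    _ ≤ _ := Finset.sum_le_sum fun i _ => hocc i
  have h2 : ∑ i : Fin n, (Finset.univ.filter (fun a : Fin m => ∃ r, (ψ a r).1 = i)).card
      = ∑ a : Fin m, (Finset.univ.filter (fun i : Fin n => ∃ r, (ψ a r).1 = i)).card := by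
    simp only [Finset.card_filter]
    exact Finset.sum_comm
  have h3 : ∀ a : Fin m,
      (Finset.univ.filter (fun i : Fin n => ∃ r, (ψ a r).1 = i)).card ≤ 3 := by
    intro a
    have hsub : (Finset.univ.filter (fun i : Fin n => ∃ r, (ψ a r).1 = i))
        ⊆ Finset.univ.image (fun r => (ψ a r).1) := by
      intro i hi
      simp only [Finset.mem_filter] at hi
      obtain ⟨_, r, hr⟩ := hi
      exact Finset.mem_image.mpr ⟨r, Finset.mem_univ _, hr⟩
    calc _ ≤ (Finset.univ.image (fun r : Fin 3 => (ψ a r).1)).card := Finset.card_le_card hsub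
    _ ≤ (Finset.univ : Finset (Fin 3)).card := Finset.card_image_le
    _ = 3 := by simp
  calc n ≤ _ := h1
  _ = _ := h2
  _ ≤ ∑ _a : Fin m, 3 := Finset.sum_le_sum fun a _ => h3 a
  _ = 3 * m := by simp [Nat.mul_comm]

end Count

/-- Reduction from NAE3-SAT to monotone NAE3-SAT (Lemma: nae3sat-mononae3sat). -/
theorem stmt_8 (n m d : ℕ) (hn : 1 ≤ n) (hm : 1 ≤ m) (hd : 1 ≤ d)
    (ε : ℝ) (hε0 : 0 < ε) (hε1 : ε < 1)
    (ψ : Fin m → Fin 3 → Fin n × Bool)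
    (hocc : ∀ i : Fin n, 1 ≤ occCount ψ i ∧ occCount ψ i ≤ d) :
    ∃ φ : Fin (m + 4 * d * n) → Fin 3 → Fin (2 * n + 3 * d * n) × Bool,
      (∀ a r, (φ a r).2 = true) ∧
      (∀ i : Fin (2 * n + 3 * d * n), occCount φ i ≤ 4 * d) ∧
      ((∃ σ : Fin n → Bool, ∀ a, NAESatC σ (ψ a)) →
        ∃ τ : Fin (2 * n + 3 * d * n) → Bool, ∀ a, NAESatC τ (φ a)) ∧
      ((∀ σ : Fin n → Bool, (naeCount σ ψ : ℝ) ≤ (1 - ε) * m) →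
        ∀ τ : Fin (2 * n + 3 * d * n) → Bool,
          (naeCount τ φ : ℝ) ≤ (1 - ε / (1 + 12 * d)) * (m + 4 * d * n)) := by
  classical
  have cardI : Fintype.card (Ired n m d) = m + 4 * d * n := by
    simp [Ired]; ring
  have cardW : Fintype.card (Wred n d) = 2 * n + 3 * d * n := by
    simp [Wred]; ring
  let eI : Ired n m d ≃ Fin (m + 4 * d * n) := Fintype.equivFinOfCardEq cardI
  let eW : Wred n d ≃ Fin (2 * n + 3 * d * n) := Fintype.equivFinOfCardEq cardW
  have hnae : ∀ (τ : Fin (2 * n + 3 * d * n) → Bool) (x : Ired n m d),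
      NAESatC τ (fun r => (eW (Phi0 d ψ x r).1, true)) ↔
        NAESatC (fun w => τ (eW w)) (Phi0 d ψ x) := by
    intro τ x
    apply nae_congr
    intro r
    have h2 := Phi0_snd d ψ x r
    unfold litVal
    rw [h2]
    try simp
  refine ⟨fun a r => (eW (Phi0 d ψ (eI.symm a) r).1, true), fun a r => rfl, ?_, ?_, ?_⟩
  · -- occurrence bound
    intro w'
    have hocc1 : occCount (fun a r => (eW (Phi0 d ψ (eI.symm a) r).1, true)) w'
        = (Finset.univ.filter fun x : Ired n m d =>
            ∃ r, (Phi0 d ψ x r).1 = eW.symm w').card := by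
      unfold occCount
      rw [card_filter_equiv eI]
      congr 1
      ext x
      simp only [Finset.mem_filter, Finset.mem_univ, true_and, Equiv.symm_apply_apply]
      constructor
      · rintro ⟨r, hr⟩; exact ⟨r, by rw [← hr, Equiv.symm_apply_apply]⟩
      · rintro ⟨r, hr⟩; exact ⟨r, by rw [hr, Equiv.apply_symm_apply]⟩
    rw [hocc1, card_filter_sum]
    rcases hw : eW.symm w' with (i | i) | ⟨i, t, u⟩
    · -- the variable p_i
      have hP : (Finset.univ.filter fun a : Fin m =>
          ∃ r, (Phi0 d ψ (Sum.inl a) r).1 = Sum.inl (Sum.inl i)).card ≤ d := by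
        refine le_trans (Finset.card_le_card ?_) (hocc i).2
        intro a ha
        rw [Finset.mem_filter] at ha ⊢
        obtain ⟨_, r, hr⟩ := ha
        exact ⟨Finset.mem_univ _, r, mvred_pl hr⟩
      have hG : (Finset.univ.filter fun x : Fin n × Fin d × Fin 4 =>
          ∃ r, (Phi0 d ψ (Sum.inr x) r).1 = Sum.inl (Sum.inl i)).card ≤ 3 * d := by
        refine le_trans (Finset.card_le_card ?_) (card_gadget_main i)
        intro x hx
        rw [Finset.mem_filter] at hx ⊢
        obtain ⟨_, r, hr⟩ := hx
        obtain ⟨h1, h2⟩ := gad_eq_pl hr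
        exact ⟨Finset.mem_univ _, h1, h2⟩
      omega
    · -- the variable q_i
      have hP : (Finset.univ.filter fun a : Fin m =>
          ∃ r, (Phi0 d ψ (Sum.inl a) r).1 = Sum.inl (Sum.inr i)).card ≤ d := by
        refine le_trans (Finset.card_le_card ?_) (hocc i).2
        intro a ha
        rw [Finset.mem_filter] at ha ⊢
        obtain ⟨_, r, hr⟩ := ha
        exact ⟨Finset.mem_univ _, r, mvred_pr hr⟩
      have hG : (Finset.univ.filter fun x : Fin n × Fin d × Fin 4 =>
          ∃ r, (Phi0 d ψ (Sum.inr x) r).1 = Sum.inl (Sum.inr i)).card ≤ 3 * d := by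
        refine le_trans (Finset.card_le_card ?_) (card_gadget_main i)
        intro x hx
        rw [Finset.mem_filter] at hx ⊢
        obtain ⟨_, r, hr⟩ := hx
        obtain ⟨h1, h2⟩ := gad_eq_pr hr
        exact ⟨Finset.mem_univ _, h1, h2⟩
      omega
    · -- an auxiliary variable
      have hP : (Finset.univ.filter fun a : Fin m =>
          ∃ r, (Phi0 d ψ (Sum.inl a) r).1 = Sum.inr (i, t, u)).card = 0 := by
        rw [Finset.card_eq_zero]
        apply Finset.filter_false_of_mem
        rintro a _ ⟨r, hr⟩
        simp [Phi0, mvred] at hr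
      have hG : (Finset.univ.filter fun x : Fin n × Fin d × Fin 4 =>
          ∃ r, (Phi0 d ψ (Sum.inr x) r).1 = Sum.inr (i, t, u)).card ≤ 4 := by
        refine le_trans (Finset.card_le_card ?_) (card_gadget_aux i t)
        intro x hx
        rw [Finset.mem_filter] at hx ⊢
        obtain ⟨_, r, hr⟩ := hx
        obtain ⟨h1, h2⟩ := gad_eq_aux hr
        exact ⟨Finset.mem_univ _, h1, h2⟩
      omega
  · -- completeness
    rintro ⟨σ, hσ⟩
    let τ0 : Wred n d → Bool := fun w =>
      match w with
      | Sum.inl (Sum.inl i) => σ i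
      | Sum.inl (Sum.inr i) => !(σ i)
      | Sum.inr (_, _, u) => decide (u.1 = 2)
    refine ⟨fun v => τ0 (eW.symm v), fun a => ?_⟩
    rw [hnae (fun v => τ0 (eW.symm v)) (eI.symm a)]
    have hτ : (fun w => τ0 (eW.symm (eW w))) = τ0 :=
      funext fun w => by rw [Equiv.symm_apply_apply]
    rw [hτ]
    rcases hx : eI.symm a with a' | ⟨i, t, c⟩
    · exact (nae_congr (fun r => litVal_mvred τ0 (ψ a' r) rfl)).mpr (hσ a')
    · exact gad_sat τ0 i t c rfl (fun u => rfl)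
  · -- soundness
    intro hs τ
    set τ0 : Wred n d → Bool := fun w => τ (eW w) with hτ0
    set σ : Fin n → Bool := fun i => τ0 (Sum.inl (Sum.inl i)) with hσdef
    set S : Finset (Fin n) := Finset.univ.filter
      (fun i => τ0 (Sum.inl (Sum.inr i)) = τ0 (Sum.inl (Sum.inl i))) with hSdef
    have hcount : naeCount τ (fun a r => (eW (Phi0 d ψ (eI.symm a) r).1, true))
        = (Finset.univ.filter fun x : Ired n m d => NAESatC τ0 (Phi0 d ψ x)).card := by
      unfold naeCount
      rw [card_filter_equiv eI]
      congr 1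
      ext x
      simp only [Finset.mem_filter, Finset.mem_univ, true_and, Equiv.symm_apply_apply]
      exact hnae τ x
    have hsplit := card_filter_sum (fun x : Ired n m d => NAESatC τ0 (Phi0 d ψ x))
    -- bound on the translated part
    have hP : (Finset.univ.filter fun a : Fin m => NAESatC τ0 (Phi0 d ψ (Sum.inl a))).card
        ≤ naeCount σ ψ + d * S.card := by
      have hsub : (Finset.univ.filter fun a : Fin m => NAESatC τ0 (Phi0 d ψ (Sum.inl a)))
          ⊆ (Finset.univ.filter fun a => NAESatC σ (ψ a)) ∪
            S.biUnion (fun i => Finset.univ.filter fun a => ∃ r, (ψ a r).1 = i) := by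
        intro a ha
        rw [Finset.mem_filter] at ha
        by_cases htouch : ∃ i ∈ S, ∃ r, (ψ a r).1 = i
        · obtain ⟨i, hiS, r, hr⟩ := htouch
          exact Finset.mem_union_right _ (Finset.mem_biUnion.mpr
            ⟨i, hiS, Finset.mem_filter.mpr ⟨Finset.mem_univ _, r, hr⟩⟩)
        · push_neg at htouch
          apply Finset.mem_union_left
          rw [Finset.mem_filter]
          refine ⟨Finset.mem_univ _, ?_⟩
          have hcons : ∀ r, litVal τ0 (Phi0 d ψ (Sum.inl a) r) = litVal σ (ψ a r) := by
            intro r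
            apply litVal_mvred
            have hnotS : (ψ a r).1 ∉ S := fun hmem => htouch _ hmem r rfl
            have hne : τ0 (Sum.inl (Sum.inr (ψ a r).1)) ≠ τ0 (Sum.inl (Sum.inl (ψ a r).1)) :=
              fun h => hnotS (by rw [hSdef]; exact Finset.mem_filter.mpr ⟨Finset.mem_univ _, h⟩)
            exact Bool.eq_not_iff.mpr hne
          exact (nae_congr hcons).mp ha.2
      calc (Finset.univ.filter fun a : Fin m => NAESatC τ0 (Phi0 d ψ (Sum.inl a))).card
          ≤ _ := Finset.card_le_card hsub
        _ ≤ (Finset.univ.filter fun a => NAESatC σ (ψ a)).card +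
            (S.biUnion (fun i => Finset.univ.filter fun a => ∃ r, (ψ a r).1 = i)).card :=
            Finset.card_union_le _ _
        _ ≤ naeCount σ ψ + d * S.card := by
            refine Nat.add_le_add le_rfl ?_
            refine le_trans Finset.card_biUnion_le ?_
            refine le_trans (Finset.sum_le_sum fun i _ => (hocc i).2) ?_
            rw [Finset.sum_const, smul_eq_mul, Nat.mul_comm]
    -- bound on the gadget part
    have hG : (Finset.univ.filter fun x : Fin n × Fin d × Fin 4 =>
        NAESatC τ0 (Phi0 d ψ (Sum.inr x))).card + d * S.card ≤ 4 * d * n := by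
      rw [card_filter_prod]
      have hgS : ∀ i ∈ S, (Finset.univ.filter fun y : Fin d × Fin 4 =>
          NAESatC τ0 (Phi0 d ψ (Sum.inr (i, y)))).card ≤ 3 * d := by
        intro i hiS
        rw [card_filter_prod]
        have hpq : τ0 (Sum.inl (Sum.inr i)) = τ0 (Sum.inl (Sum.inl i)) := by
          have hiS' := hiS
          rw [hSdef] at hiS'
          exact (Finset.mem_filter.mp hiS').2
        have hper : ∀ t : Fin d, (Finset.univ.filter fun c : Fin 4 =>
            NAESatC τ0 (Phi0 d ψ (Sum.inr (i, t, c)))).card ≤ 3 := by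
          intro t
          obtain ⟨c0, hc0⟩ := gad_fail τ0 i t hpq
          have hsub : (Finset.univ.filter fun c : Fin 4 =>
              NAESatC τ0 (Phi0 d ψ (Sum.inr (i, t, c)))) ⊆ Finset.univ.erase c0 := by
            intro c hc
            rw [Finset.mem_filter] at hc
            rw [Finset.mem_erase]
            refine ⟨?_, Finset.mem_univ _⟩
            rintro rfl
            exact hc0 hc.2
          refine le_trans (Finset.card_le_card hsub) ?_
          rw [Finset.card_erase_of_mem (Finset.mem_univ _)]
          simp
        calc ∑ t : Fin d, (Finset.univ.filter fun c : Fin 4 =>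
              NAESatC τ0 (Phi0 d ψ (Sum.inr (i, t, c)))).card
            ≤ ∑ _t : Fin d, 3 := Finset.sum_le_sum (fun t _ => hper t)
          _ = 3 * d := by
              rw [Finset.sum_const, Finset.card_univ, Fintype.card_fin, smul_eq_mul]
              omega
      have hgAll : ∀ i : Fin n, (Finset.univ.filter fun y : Fin d × Fin 4 =>
          NAESatC τ0 (Phi0 d ψ (Sum.inr (i, y)))).card ≤ 4 * d := by
        intro i
        refine le_trans (Finset.card_filter_le _ _) ?_
        rw [Finset.card_univ]
        simp [Nat.mul_comm]
      have hrw : (∑ i : Fin n, (Finset.univ.filter fun y : Fin d × Fin 4 =>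
            NAESatC τ0 (Phi0 d ψ (Sum.inr (i, y)))).card) + d * S.card
          = ∑ i : Fin n, ((Finset.univ.filter fun y : Fin d × Fin 4 =>
            NAESatC τ0 (Phi0 d ψ (Sum.inr (i, y)))).card + if i ∈ S then d else 0) := by
        rw [Finset.sum_add_distrib]
        congr 1
        rw [Finset.sum_ite_mem, Finset.univ_inter, Finset.sum_const, smul_eq_mul,
          Nat.mul_comm]
      rw [hrw]
      calc _ ≤ ∑ _i : Fin n, 4 * d := by
            refine Finset.sum_le_sum fun i _ => ?_
            by_cases hi : i ∈ S
            · have := hgS i hi; simp [hi]; omega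
            · have := hgAll i; simp [hi]; omega
        _ = 4 * d * n := by
            rw [Finset.sum_const, Finset.card_univ, Fintype.card_fin, smul_eq_mul]
            ring
    have hN : (Finset.univ.filter fun x : Ired n m d => NAESatC τ0 (Phi0 d ψ x)).card
        ≤ naeCount σ ψ + 4 * d * n := by omega
    have h3m : n ≤ 3 * m := le_three_mul ψ (fun i => (hocc i).1)
    have hreal1 : (naeCount σ ψ : ℝ) ≤ (1 - ε) * m := hs σ
    rw [hcount]
    have hstep : ((Finset.univ.filter fun x : Ired n m d =>
        NAESatC τ0 (Phi0 d ψ x)).card : ℝ) ≤ (1 - ε) * m + 4 * d * n := by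
      calc ((Finset.univ.filter fun x : Ired n m d =>
            NAESatC τ0 (Phi0 d ψ x)).card : ℝ)
          ≤ ((naeCount σ ψ + 4 * d * n : ℕ) : ℝ) := by exact_mod_cast hN
        _ = (naeCount σ ψ : ℝ) + 4 * d * n := by push_cast; ring
        _ ≤ (1 - ε) * m + 4 * d * n := by linarith
    have hc1 : (0 : ℝ) < 1 + 12 * d := by positivity
    have hkey : ε / (1 + 12 * (d : ℝ)) * (m + 4 * d * n) ≤ ε * m := by
      rw [div_mul_eq_mul_div, div_le_iff₀ hc1]
      have hnm : (n : ℝ) ≤ 3 * m := by exact_mod_cast h3m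
      have hd1 : (1 : ℝ) ≤ d := by exact_mod_cast hd
      nlinarith [mul_le_mul_of_nonneg_left hnm (by positivity : (0 : ℝ) ≤ ε * (4 * d))]
    nlinarith [hstep, hkey]
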